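/- Let m ≥ r ≥ r_A ≥ 1 be integers, let U ∈ St(m, r_A), and let Z ∈ ℝ^{m×r} have full column rank (so ZᵀZ is positive definite). Set X = Z(ZᵀZ)^{−1/2}, where (ZᵀZ)^{−1/2} is the inverse of the positive definite square root of ZᵀZ. Then X ∈ St(m,r) and σ_{r_A}(UᵀX) ≥ σ_{r_A}(UᵀZ)/σ_1(Z). -/

import Mathlib

open Matrix MeasureTheory ProbabilityTheory BigOperators

noncomputable section

/-- Frobenius norm of a real matrix. -/
def frob {m n : ℕ} (M : Matrix (Fin m) (Fin n) ℝ) : ℝ :=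
  Real.sqrt (∑ i, ∑ j, (M i j) ^ 2)

/-- Euclidean norm of a vector in `ℝⁿ`. -/
def vnorm {n : ℕ} (v : Fin n → ℝ) : ℝ :=
  Real.sqrt (∑ i, (v i) ^ 2)

/-- Spectral norm (operator 2-norm) of a real matrix. -/
def spec {m n : ℕ} (M : Matrix (Fin m) (Fin n) ℝ) : ℝ :=
  ‖LinearMap.toContinuousLinearMap (Matrix.toEuclideanLin M)‖

theorem isHermitian_tmul {m n : ℕ} (M : Matrix (Fin m) (Fin n) ℝ) :
    (Mᵀ * M).IsHermitian := by
  simpa [Matrix.conjTranspose_eq_transpose_of_trivial] using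
    Matrix.isHermitian_conjTranspose_mul_self M

theorem posSemidef_tmul {m n : ℕ} (M : Matrix (Fin m) (Fin n) ℝ) :
    (Mᵀ * M).PosSemidef := by
  simpa [Matrix.conjTranspose_eq_transpose_of_trivial] using
    Matrix.posSemidef_conjTranspose_mul_self M

/-- The `i`-th largest singular value (1-indexed) of a real matrix, i.e. the square root of the
`i`-th largest eigenvalue of `MᵀM`; junk value `0` when `i` is out of range. -/
def svalue {m n : ℕ} (M : Matrix (Fin m) (Fin n) ℝ) (i : ℕ) : ℝ :=
  if h : 1 ≤ i ∧ i ≤ n then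
    Real.sqrt ((isHermitian_tmul M).eigenvalues
      (Tuple.sort (isHermitian_tmul M).eigenvalues ⟨n - i, by omega⟩))
  else 0

/-- Membership in the Stiefel manifold `St(m,r)`. -/
def Stiefel {m r : ℕ} (X : Matrix (Fin m) (Fin r) ℝ) : Prop :=
  Xᵀ * X = 1

/-- The Loewner order on (symmetric) real matrices: `A ⪯ B`. -/
def loewnerLE {m : ℕ} (A B : Matrix (Fin m) (Fin m) ℝ) : Prop :=
  (B - A).PosSemidef

/-- The inverse of the positive semidefinite square root of a matrix (junk value `0` when the
matrix is not positive semidefinite). -/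
def sqrtInv {r : ℕ} (S : Matrix (Fin r) (Fin r) ℝ) : Matrix (Fin r) (Fin r) ℝ :=
  haveI := Classical.propDecidable S.PosSemidef
  if h : S.PosSemidef then
    (h.1.eigenvectorUnitary.1 * diagonal ((↑) ∘ (√·) ∘ h.1.eigenvalues) *
      (star h.1.eigenvectorUnitary : Matrix (Fin r) (Fin r) ℝ))⁻¹ else 0

/-- The linear sensing map `𝓜` determined by feature matrices `M_i`:
`𝓜(B)_i = Tr(M_iᵀ B)`. -/
def calM {m n : ℕ} (Ms : Fin n → Matrix (Fin m) (Fin m) ℝ)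
    (B : Matrix (Fin m) (Fin m) ℝ) : Fin n → ℝ :=
  fun i => ((Ms i)ᵀ * B).trace

/-- The adjoint `𝓜*` of the sensing map: `𝓜*(y) = ∑ i, y_i M_i`. -/
def calMadj {m n : ℕ} (Ms : Fin n → Matrix (Fin m) (Fin m) ℝ)
    (y : Fin n → ℝ) : Matrix (Fin m) (Fin m) ℝ :=
  ∑ i, y i • Ms i

/-- `(𝓜*𝓜 − 𝓘)(B)`. -/
def calE {m n : ℕ} (Ms : Fin n → Matrix (Fin m) (Fin m) ℝ)
    (B : Matrix (Fin m) (Fin m) ℝ) : Matrix (Fin m) (Fin m) ℝ :=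
  calMadj Ms (calM Ms B) - B

/-- The `(s, δ)`-restricted isometry property for the sensing map determined by `Ms`. -/
def IsRIP {m n : ℕ} (Ms : Fin n → Matrix (Fin m) (Fin m) ℝ) (s : ℕ) (δ : ℝ) : Prop :=
  ∀ B : Matrix (Fin m) (Fin m) ℝ, B.IsSymm → B.rank ≤ s →
    (1 - δ) * frob B ^ 2 ≤ vnorm (calM Ms B) ^ 2 ∧
      vnorm (calM Ms B) ^ 2 ≤ (1 + δ) * frob B ^ 2

/-- The Riemannian gradient on the Stiefel manifold obtained from the Euclidean gradient `g`
at the point `X`. -/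
def Rgrad {m r : ℕ} (X g : Matrix (Fin m) (Fin r) ℝ) : Matrix (Fin m) (Fin r) ℝ :=
  (1 - X * Xᵀ) * g + (2⁻¹ : ℝ) • (X * (Xᵀ * g - gᵀ * X))

/-- One step of Riemannian gradient descent (with `μ = 2`) for the weight-normalized
matrix sensing problem. -/
def RGDstep {m r n : ℕ} (Ms : Fin n → Matrix (Fin m) (Fin m) ℝ)
    (A : Matrix (Fin m) (Fin m) ℝ) (η : ℝ)
    (p : Matrix (Fin m) (Fin r) ℝ × Matrix (Fin r) (Fin r) ℝ) :
    Matrix (Fin m) (Fin r) ℝ × Matrix (Fin r) (Fin r) ℝ :=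
  let X := p.1
  let Θ := p.2
  let Gt := calMadj Ms (calM Ms (X * Θ * Xᵀ - A)) * X * Θ
  let G := Rgrad X Gt
  let X' := (X - η • G) * sqrtInv (1 + η ^ 2 • (Gᵀ * G))
  let Θ' := X'ᵀ * A * X' - X'ᵀ * calE Ms (X' * Θ * X'ᵀ - A) * X'
  (X', Θ')

/-- The standard Gaussian ensemble on `m × r` real matrices (i.i.d. `N(0,1)` entries). -/
def gaussianEnsemble (m r : ℕ) : Measure (Fin m → Fin r → ℝ) :=
  Measure.pi fun _ : Fin m => Measure.pi fun _ : Fin r => gaussianReal 0 1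

end


noncomputable section

namespace StiefelAux

open Module

variable {n : ℕ}

lemma dot_sum_sum {ι : Type*} [Fintype ι] [DecidableEq ι] (v : ι → Fin n → ℝ)
    (hv : ∀ i j, v i ⬝ᵥ v j = if i = j then (1:ℝ) else 0) (c d : ι → ℝ) :
    (∑ i, c i • v i) ⬝ᵥ (∑ j, d j • v j) = ∑ i, c i * d i := by
  have key : (∑ i, c i • v i) ⬝ᵥ (∑ j, d j • v j)
      = ∑ i, ∑ j, (c i * d j) * (v i ⬝ᵥ v j) :=
    calc (∑ i, c i • v i) ⬝ᵥ (∑ j, d j • v j)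
        = ∑ a, ∑ i, ∑ j, (c i * v i a) * (d j * v j a) := by
          simp [dotProduct, Finset.sum_apply, Pi.smul_apply, smul_eq_mul,
            Finset.sum_mul_sum]
      _ = ∑ i, ∑ a, ∑ j, (c i * v i a) * (d j * v j a) := Finset.sum_comm
      _ = ∑ i, ∑ j, ∑ a, (c i * v i a) * (d j * v j a) :=
          Finset.sum_congr rfl fun i _ => Finset.sum_comm
      _ = ∑ i, ∑ j, (c i * d j) * (v i ⬝ᵥ v j) := by
          refine Finset.sum_congr rfl fun i _ => Finset.sum_congr rfl fun j _ => ?_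
          simp only [dotProduct, Finset.mul_sum]
          exact Finset.sum_congr rfl fun a _ => by ring
  rw [key]
  simp [hv, mul_ite]

lemma sum_smul_dot {ι : Type*} [Fintype ι] (v : ι → Fin n → ℝ) (c : ι → ℝ) (w : Fin n → ℝ) :
    (∑ j, c j • v j) ⬝ᵥ w = ∑ j, c j * (v j ⬝ᵥ w) := by
  simp only [dotProduct, Finset.sum_apply, Pi.smul_apply, smul_eq_mul, Finset.sum_mul,
    Finset.mul_sum]
  rw [Finset.sum_comm]
  exact Finset.sum_congr rfl fun j _ => Finset.sum_congr rfl fun a _ => by ring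

lemma eigb_dot {A : Matrix (Fin n) (Fin n) ℝ} (hA : A.IsHermitian) (i j : Fin n) :
    (hA.eigenvectorBasis i : Fin n → ℝ) ⬝ᵥ (hA.eigenvectorBasis j : Fin n → ℝ)
      = if i = j then (1:ℝ) else 0 := by
  have := orthonormal_iff_ite.mp hA.eigenvectorBasis.orthonormal i j
  simpa [PiLp.inner_apply, dotProduct, RCLike.inner_apply, conj_trivial, mul_comm] using this

lemma mulVec_sum_smul {A : Matrix (Fin n) (Fin n) ℝ} {ι : Type*} [Fintype ι]
    (v : ι → Fin n → ℝ) (c : ι → ℝ) :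
    A *ᵥ (∑ i, c i • v i) = ∑ i, c i • (A *ᵥ v i) := by
  have h : A.mulVecLin (∑ i, c i • v i) = ∑ i, c i • A.mulVecLin (v i) := by
    rw [map_sum]
    exact Finset.sum_congr rfl fun i _ => by rw [LinearMap.map_smul]
  simpa only [Matrix.mulVecLin_apply] using h

lemma orthoFam_linearIndependent {ι : Type*} [Fintype ι] [DecidableEq ι] (v : ι → Fin n → ℝ)
    (hv : ∀ i j, v i ⬝ᵥ v j = if i = j then (1:ℝ) else 0) :
    LinearIndependent ℝ v := by
  rw [Fintype.linearIndependent_iff]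
  intro c hc i
  have h := congrArg (fun x => x ⬝ᵥ v i) hc
  simp only [zero_dotProduct] at h
  rw [sum_smul_dot] at h
  simpa [hv, Finset.sum_ite_eq'] using h

/-- Courant–Fischer style lower bound. -/
lemma cf_lower {A : Matrix (Fin n) (Fin n) ℝ} (hA : A.IsHermitian) (k : ℕ)
    (hk1 : 1 ≤ k) (hkn : k ≤ n) (t : ℝ)
    (V : Submodule ℝ (Fin n → ℝ)) (hV : k ≤ Module.finrank ℝ V)
    (hq : ∀ x ∈ V, t * (x ⬝ᵥ x) ≤ x ⬝ᵥ (A *ᵥ x)) :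
    t ≤ hA.eigenvalues (Tuple.sort hA.eigenvalues ⟨n - k, by omega⟩) := by
  classical
  set σ := Tuple.sort hA.eigenvalues with hσ
  set lam := hA.eigenvalues with hlam
  set v : Fin n → Fin n → ℝ := fun j => (hA.eigenvectorBasis (σ j) : Fin n → ℝ) with hv
  have hvd : ∀ i j, v i ⬝ᵥ v j = if i = j then (1:ℝ) else 0 := by
    intro i j
    rw [hv]
    simp only []
    rw [eigb_dot hA (σ i) (σ j)]
    simp [Equiv.apply_eq_iff_eq]
  have hAv : ∀ j, A *ᵥ v j = lam (σ j) • v j := fun j =>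
    hA.mulVec_eigenvectorBasis (σ j)
  set w : Fin (n - k + 1) → Fin n → ℝ := fun i => v ⟨i.1, by omega⟩ with hw
  have hwd : ∀ i j, w i ⬝ᵥ w j = if i = j then (1:ℝ) else 0 := by
    intro i j
    rw [hw]; simp only []
    rw [hvd]
    congr 1
    simp [Fin.ext_iff]
  set W : Submodule ℝ (Fin n → ℝ) := Submodule.span ℝ (Set.range w) with hW
  have hWrank : finrank ℝ W = n - k + 1 := by
    rw [hW, finrank_span_eq_card (orthoFam_linearIndependent w hwd)]
    simp
  have hsup : finrank ℝ (V ⊔ W : Submodule ℝ (Fin n → ℝ)) ≤ n := by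
    refine le_trans (Submodule.finrank_le _) ?_
    simp [Module.finrank_fintype_fun_eq_card]
  have hinf : 1 ≤ finrank ℝ (V ⊓ W : Submodule ℝ (Fin n → ℝ)) := by
    have := Submodule.finrank_sup_add_finrank_inf_eq V W
    omega
  obtain ⟨x, hxne⟩ := Module.finrank_pos_iff_exists_ne_zero.mp (by omega :
    0 < finrank ℝ ↥(V ⊓ W))
  have hxV : (x : Fin n → ℝ) ∈ V := x.2.1
  have hxW : (x : Fin n → ℝ) ∈ W := x.2.2
  have hx0 : (x : Fin n → ℝ) ≠ 0 := by
    simpa [Submodule.coe_eq_zero] using hxne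
  obtain ⟨c, hc⟩ := (Submodule.mem_span_range_iff_exists_fun ℝ).mp hxW
  set y : Fin n → ℝ := (x : Fin n → ℝ) with hy
  have hd : y ⬝ᵥ y = ∑ i, c i * c i := by rw [← hc]; exact dot_sum_sum w hwd c c
  have hdpos : 0 < y ⬝ᵥ y := by
    have hnn : 0 ≤ y ⬝ᵥ y := by
      rw [hd]; exact Finset.sum_nonneg fun i _ => mul_self_nonneg _
    rcases lt_or_eq_of_le hnn with h | h
    · exact h
    · exact absurd (dotProduct_self_eq_zero.mp h.symm) hx0
  have hqx : y ⬝ᵥ (A *ᵥ y) = ∑ i, lam (σ ⟨i.1, by omega⟩) * (c i * c i) := by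
    rw [← hc, mulVec_sum_smul]
    have : ∀ i : Fin (n - k + 1), c i • (A *ᵥ w i) = (c i * lam (σ ⟨i.1, by omega⟩)) • w i := by
      intro i
      rw [hw]; simp only []
      rw [hAv ⟨i.1, by omega⟩, smul_smul]
    rw [Finset.sum_congr rfl fun i _ => this i, dot_sum_sum w hwd]
    exact Finset.sum_congr rfl fun i _ => by ring
  have hmax : y ⬝ᵥ (A *ᵥ y) ≤ lam (σ ⟨n - k, by omega⟩) * (y ⬝ᵥ y) := by
    rw [hqx, hd, Finset.mul_sum]
    refine Finset.sum_le_sum fun i _ => ?_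
    have hmono : lam (σ ⟨i.1, by omega⟩) ≤ lam (σ ⟨n - k, by omega⟩) := by
      have := Tuple.monotone_sort hA.eigenvalues
        (a := ⟨i.1, by omega⟩) (b := ⟨n - k, by omega⟩) (by
          rw [Fin.le_def]
          show i.1 ≤ n - k
          have := i.isLt; omega)
      simpa [hσ, hlam] using this
    have : 0 ≤ c i * c i := mul_self_nonneg _
    nlinarith
  have ht := hq y hxV
  nlinarith

lemma dot_mulVec_comm {m n : ℕ} (M : Matrix (Fin m) (Fin n) ℝ) (x : Fin m → ℝ) (w : Fin n → ℝ) :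
    x ⬝ᵥ (M *ᵥ w) = (Mᵀ *ᵥ x) ⬝ᵥ w := by
  rw [dotProduct_mulVec, Matrix.mulVec_transpose]

lemma quad_le_max {r : ℕ} (hr : 1 ≤ r) {S : Matrix (Fin r) (Fin r) ℝ} (hS : S.IsHermitian)
    (x : Fin r → ℝ) :
    x ⬝ᵥ (S *ᵥ x) ≤ hS.eigenvalues (Tuple.sort hS.eigenvalues ⟨r - 1, by omega⟩) * (x ⬝ᵥ x) := by
  classical
  set lam := hS.eigenvalues with hlam
  set Vu : Matrix (Fin r) (Fin r) ℝ := (hS.eigenvectorUnitary : Matrix (Fin r) (Fin r) ℝ)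
    with hVu
  set y : Fin r → ℝ := Vuᵀ *ᵥ x with hy
  have hstar : star Vu = Vuᵀ := by
    rw [Matrix.star_eq_conjTranspose, Matrix.conjTranspose_eq_transpose_of_trivial]
  have hdiag : Matrix.diagonal ((RCLike.ofReal : ℝ → ℝ) ∘ lam) = Matrix.diagonal lam := by
    rfl
  have hspec : S = Vu * Matrix.diagonal lam * Vuᵀ := by
    rw [← hdiag, ← hstar]; exact hS.spectral_theorem.trans (Unitary.conjStarAlgAut_apply ..)
  have hdq : ∀ z : Fin r → ℝ, z ⬝ᵥ (Matrix.diagonal lam *ᵥ z) = ∑ i, lam i * (z i * z i) := by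
    intro z
    simp only [dotProduct, Matrix.mulVec_diagonal]
    exact Finset.sum_congr rfl fun i _ => by ring
  have h1 : x ⬝ᵥ (S *ᵥ x) = ∑ i, lam i * (y i * y i) := by
    rw [hspec, ← Matrix.mulVec_mulVec, ← Matrix.mulVec_mulVec, dot_mulVec_comm, ← hy, ← hdq]
  have hUU : Vu * Vuᵀ = 1 := by
    rw [← hstar]
    exact Matrix.mem_unitaryGroup_iff.mp hS.eigenvectorUnitary.2
  have h2 : x ⬝ᵥ x = ∑ i, y i * y i := by
    have : x ⬝ᵥ x = x ⬝ᵥ ((Vu * Vuᵀ) *ᵥ x) := by rw [hUU, Matrix.one_mulVec]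
    rw [this, ← Matrix.mulVec_mulVec, dot_mulVec_comm, ← hy]
    simp [dotProduct]
  have hmax : ∀ i, lam i ≤ lam (Tuple.sort lam ⟨r - 1, by omega⟩) := by
    intro i
    have hi : i = Tuple.sort lam ((Tuple.sort lam).symm i) := by simp
    rw [hi]
    exact Tuple.monotone_sort lam (a := (Tuple.sort lam).symm i) (b := ⟨r - 1, by omega⟩)
      (by
        rw [Fin.le_def]
        show ((Tuple.sort lam).symm i).val ≤ r - 1
        have := ((Tuple.sort lam).symm i).isLt; omega)
  rw [h1, h2, Finset.mul_sum]
  exact Finset.sum_le_sum fun i _ => by nlinarith [mul_self_nonneg (y i), hmax i]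

lemma dot_self_pos {m : ℕ} {v : Fin m → ℝ} (hv : v ≠ 0) : 0 < v ⬝ᵥ v := by
  have hnn : 0 ≤ v ⬝ᵥ v := Finset.sum_nonneg fun i _ => mul_self_nonneg _
  rcases lt_or_eq_of_le hnn with h | h
  · exact h
  · exact absurd (dotProduct_self_eq_zero.mp h.symm) hv

lemma mulVecLin_injective_of_rank {m r : ℕ} (Z : Matrix (Fin m) (Fin r) ℝ) (hZ : Z.rank = r) :
    Function.Injective Z.mulVecLin := by
  rw [← LinearMap.ker_eq_bot]
  have h := LinearMap.finrank_range_add_finrank_ker Z.mulVecLin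
  rw [Matrix.rank] at hZ
  rw [← Submodule.finrank_eq_zero (R := ℝ)]
  simp only [Module.finrank_fintype_fun_eq_card, Fintype.card_fin] at h
  omega

lemma posDef_tmul_of_rank {m r : ℕ} (Z : Matrix (Fin m) (Fin r) ℝ) (hZ : Z.rank = r) :
    (Zᵀ * Z).PosDef := by
  refine Matrix.PosDef.of_dotProduct_mulVec_pos (isHermitian_tmul Z) fun x hx => ?_
  have hzx : Z *ᵥ x ≠ 0 := by
    intro h
    apply hx
    exact mulVecLin_injective_of_rank Z hZ (by simpa [Matrix.mulVecLin_apply] using h :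
      Z.mulVecLin x = Z.mulVecLin 0)
  have heq : star x ⬝ᵥ ((Zᵀ * Z) *ᵥ x) = (Z *ᵥ x) ⬝ᵥ (Z *ᵥ x) := by
    rw [star_trivial, ← Matrix.mulVec_mulVec, dot_mulVec_comm Zᵀ, Matrix.transpose_transpose]
  rw [heq]
  exact dot_self_pos hzx

end StiefelAux

end

noncomputable section

theorem stmt1 {m r r_A : ℕ} (h1 : 1 ≤ r_A) (h2 : r_A ≤ r) (h3 : r ≤ m)
    (U : Matrix (Fin m) (Fin r_A) ℝ) (hU : Stiefel U)
    (Z : Matrix (Fin m) (Fin r) ℝ) (hZ : Z.rank = r) :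
    Stiefel (Z * sqrtInv (Zᵀ * Z)) ∧
      svalue (Uᵀ * Z) r_A / svalue Z 1 ≤ svalue (Uᵀ * (Z * sqrtInv (Zᵀ * Z))) r_A := by
  classical
  open StiefelAux in
  have hr1 : 1 ≤ r := le_trans h1 h2
  have hSpos : (Zᵀ * Z).PosDef := StiefelAux.posDef_tmul_of_rank Z hZ
  have hSpsd : (Zᵀ * Z).PosSemidef := hSpos.posSemidef
  set Q : Matrix (Fin r) (Fin r) ℝ := hSpsd.1.eigenvectorUnitary.1 *
    diagonal ((↑) ∘ (√·) ∘ hSpsd.1.eigenvalues) *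
      (star hSpsd.1.eigenvectorUnitary : Matrix (Fin r) (Fin r) ℝ) with hQdef
  set N : Matrix (Fin r) (Fin r) ℝ := Q⁻¹ with hNdef
  have hsi : sqrtInv (Zᵀ * Z) = N := by
    rw [sqrtInv, dif_pos hSpsd]
  rw [hsi]
  have hQQ : Q * Q = Zᵀ * Z := by
    have hUU : (star hSpsd.1.eigenvectorUnitary : Matrix (Fin r) (Fin r) ℝ) *
        hSpsd.1.eigenvectorUnitary.1 = 1 :=
      Unitary.star_mul_self_of_mem hSpsd.1.eigenvectorUnitary.2
    calc Q * Q = hSpsd.1.eigenvectorUnitary.1 *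
          (diagonal ((↑) ∘ (√·) ∘ hSpsd.1.eigenvalues) *
            ((star hSpsd.1.eigenvectorUnitary : Matrix (Fin r) (Fin r) ℝ) *
              hSpsd.1.eigenvectorUnitary.1) *
            diagonal ((↑) ∘ (√·) ∘ hSpsd.1.eigenvalues)) *
          (star hSpsd.1.eigenvectorUnitary : Matrix (Fin r) (Fin r) ℝ) := by
          simp only [hQdef, Matrix.mul_assoc]
      _ = hSpsd.1.eigenvectorUnitary.1 *
          diagonal (RCLike.ofReal ∘ hSpsd.1.eigenvalues) *
          (star hSpsd.1.eigenvectorUnitary : Matrix (Fin r) (Fin r) ℝ) := by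
          rw [hUU, Matrix.mul_one, diagonal_mul_diagonal]
          congr 3
          funext i
          simp [Real.mul_self_sqrt (hSpsd.eigenvalues_nonneg i)]
      _ = Zᵀ * Z := (hSpsd.1.spectral_theorem.trans (Unitary.conjStarAlgAut_apply ..)).symm
  have hQsym : Qᵀ = Q := by
    simp [hQdef, Matrix.transpose_mul, Matrix.star_eq_conjTranspose,
      Matrix.conjTranspose_eq_transpose_of_trivial, Matrix.mul_assoc]
  have hdetQ : IsUnit Q.det := by
    have hd : Q.det * Q.det = (Zᵀ * Z).det := by rw [← Matrix.det_mul, hQQ]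
    have hpos := hSpos.det_pos
    refine isUnit_iff_ne_zero.mpr fun h => ?_
    rw [h, mul_zero] at hd
    exact absurd hd.symm (ne_of_gt hpos)
  have hNQ : N * Q = 1 := Matrix.nonsing_inv_mul Q hdetQ
  have hQN : Q * N = 1 := Matrix.mul_nonsing_inv Q hdetQ
  have hNsym : Nᵀ = N := by rw [hNdef, Matrix.transpose_nonsing_inv, hQsym]
  constructor
  · show (Z * N)ᵀ * (Z * N) = 1
    calc (Z * N)ᵀ * (Z * N) = N * (Zᵀ * Z * N) := by
          simp only [Matrix.transpose_mul, hNsym, Matrix.mul_assoc]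
      _ = N * (Q * (Q * N)) := by rw [← hQQ, Matrix.mul_assoc]
      _ = 1 := by rw [hQN, Matrix.mul_one, hNQ]
  · -- singular value inequality
    set B : Matrix (Fin r_A) (Fin r) ℝ := Uᵀ * Z with hBdef
    set C : Matrix (Fin r_A) (Fin r) ℝ := Uᵀ * (Z * N) with hCdef
    have hGB := isHermitian_tmul B
    have psdB := posSemidef_tmul B
    have hGC := isHermitian_tmul C
    have hGC_eq : Cᵀ * C = N * (Bᵀ * B * N) := by
      rw [hCdef, hBdef]
      simp only [Matrix.transpose_mul, Matrix.transpose_transpose, hNsym, Matrix.mul_assoc]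
    set lamB := hGB.eigenvalues with hlamB
    set σB := Tuple.sort lamB with hσB
    set lamS := (isHermitian_tmul Z).eigenvalues with hlamS
    set σS := Tuple.sort lamS with hσS
    set lstar : ℝ := lamB (σB ⟨r - r_A, by omega⟩) with hlstar
    set cmax : ℝ := lamS (σS ⟨r - 1, by omega⟩) with hcmax
    have hlnn : 0 ≤ lstar := psdB.eigenvalues_nonneg _
    have hcpos : 0 < cmax := hSpos.eigenvalues_pos _
    -- eigenvector families
    set vB : Fin r → Fin r → ℝ := fun j => (hGB.eigenvectorBasis (σB j) : Fin r → ℝ) with hvB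
    have hvd : ∀ i j, vB i ⬝ᵥ vB j = if i = j then (1:ℝ) else 0 := by
      intro i j
      rw [hvB]
      simp only []
      rw [StiefelAux.eigb_dot hGB (σB i) (σB j)]
      simp [Equiv.apply_eq_iff_eq]
    have hAv : ∀ j, (Bᵀ * B) *ᵥ vB j = lamB (σB j) • vB j := fun j =>
      hGB.mulVec_eigenvectorBasis (σB j)
    set vs : Fin r_A → Fin r → ℝ := fun i => vB ⟨r - r_A + i.1, by omega⟩ with hvs
    have hvsd : ∀ i j, vs i ⬝ᵥ vs j = if i = j then (1:ℝ) else 0 := by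
      intro i j
      rw [hvs]; simp only []
      rw [hvd]
      congr 1
      simp [Fin.ext_iff]
    set u : Fin r_A → Fin r → ℝ := fun i => Q *ᵥ vs i with hu
    have hQsum : ∀ d : Fin r_A → ℝ, (∑ i, d i • u i) = Q *ᵥ (∑ i, d i • vs i) := by
      intro d
      rw [StiefelAux.mulVec_sum_smul]
    have hrecover : ∀ d : Fin r_A → ℝ, N *ᵥ (Q *ᵥ (∑ i, d i • vs i)) = ∑ i, d i • vs i := by
      intro d
      rw [Matrix.mulVec_mulVec, hNQ, Matrix.one_mulVec]
    have hu_li : LinearIndependent ℝ u := by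
      rw [Fintype.linearIndependent_iff]
      intro d hd i
      have h0 : Q *ᵥ (∑ i, d i • vs i) = 0 := by rw [← hQsum]; exact hd
      have h1' : (∑ i, d i • vs i) = 0 := by
        have := congrArg (fun z => N *ᵥ z) h0
        simpa [hrecover d, Matrix.mulVec_zero] using this
      exact Fintype.linearIndependent_iff.mp
        (StiefelAux.orthoFam_linearIndependent vs hvsd) d h1' i
    set V : Submodule ℝ (Fin r → ℝ) := Submodule.span ℝ (Set.range u) with hV
    have hVrank : r_A ≤ Module.finrank ℝ V := by
      rw [hV, finrank_span_eq_card hu_li]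
      simp
    have hq : ∀ x ∈ V, (lstar / cmax) * (x ⬝ᵥ x) ≤ x ⬝ᵥ ((Cᵀ * C) *ᵥ x) := by
      intro x hx
      obtain ⟨d, hd⟩ := (Submodule.mem_span_range_iff_exists_fun ℝ).mp hx
      set xv : Fin r → ℝ := ∑ i, d i • vs i with hxv
      have hxQ : x = Q *ᵥ xv := by rw [← hd, hQsum]
      have hGCx : x ⬝ᵥ ((Cᵀ * C) *ᵥ x) = xv ⬝ᵥ ((Bᵀ * B) *ᵥ xv) := by
        rw [hGC_eq, hxQ]
        have h3 : (N * (Bᵀ * B * N)) *ᵥ (Q *ᵥ xv) = N *ᵥ ((Bᵀ * B) *ᵥ xv) := by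
          rw [Matrix.mulVec_mulVec, Matrix.mul_assoc, Matrix.mul_assoc, hNQ, Matrix.mul_one,
            ← Matrix.mulVec_mulVec]
        rw [h3, StiefelAux.dot_mulVec_comm N, hNsym, Matrix.mulVec_mulVec, hNQ,
          Matrix.one_mulVec]
      have hquad : xv ⬝ᵥ ((Bᵀ * B) *ᵥ xv)
          = ∑ i, lamB (σB ⟨r - r_A + i.1, by omega⟩) * (d i * d i) := by
        rw [hxv, StiefelAux.mulVec_sum_smul]
        have hterm : ∀ i : Fin r_A, d i • ((Bᵀ * B) *ᵥ vs i)
            = (d i * lamB (σB ⟨r - r_A + i.1, by omega⟩)) • vs i := by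
          intro i
          rw [hvs]; simp only []
          rw [hAv ⟨r - r_A + i.1, by omega⟩, smul_smul]
        rw [Finset.sum_congr rfl fun i _ => hterm i, StiefelAux.dot_sum_sum vs hvsd]
        exact Finset.sum_congr rfl fun i _ => by ring
      have hdvv : xv ⬝ᵥ xv = ∑ i, d i * d i := StiefelAux.dot_sum_sum vs hvsd d d
      have hxx : x ⬝ᵥ x = xv ⬝ᵥ ((Zᵀ * Z) *ᵥ xv) := by
        rw [hxQ, StiefelAux.dot_mulVec_comm Q, hQsym, Matrix.mulVec_mulVec, hQQ,
          dotProduct_comm]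
      have hs_le : xv ⬝ᵥ ((Zᵀ * Z) *ᵥ xv) ≤ cmax * (xv ⬝ᵥ xv) :=
        StiefelAux.quad_le_max hr1 (isHermitian_tmul Z) xv
      have hlower : lstar * (∑ i, d i * d i) ≤ xv ⬝ᵥ ((Bᵀ * B) *ᵥ xv) := by
        rw [hquad, Finset.mul_sum]
        refine Finset.sum_le_sum fun i _ => ?_
        have hmono : lstar ≤ lamB (σB ⟨r - r_A + i.1, by omega⟩) := by
          rw [hlstar]
          exact Tuple.monotone_sort lamB (a := ⟨r - r_A, by omega⟩)
            (b := ⟨r - r_A + i.1, by omega⟩) (by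
              rw [Fin.le_def]
              show r - r_A ≤ r - r_A + i.1
              omega)
        nlinarith [mul_self_nonneg (d i)]
      have hxxle : x ⬝ᵥ x ≤ cmax * (∑ i, d i * d i) := by
        rw [hxx, ← hdvv]; exact hs_le
      have hchain : (lstar / cmax) * (x ⬝ᵥ x) ≤ lstar * (∑ i, d i * d i) := by
        have h5 : (lstar / cmax) * (x ⬝ᵥ x) ≤ (lstar / cmax) * (cmax * (∑ i, d i * d i)) :=
          mul_le_mul_of_nonneg_left hxxle (div_nonneg hlnn (le_of_lt hcpos))
        have h6 : (lstar / cmax) * (cmax * (∑ i, d i * d i)) = lstar * (∑ i, d i * d i) := by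
          field_simp
        linarith
      calc (lstar / cmax) * (x ⬝ᵥ x) ≤ lstar * (∑ i, d i * d i) := hchain
        _ ≤ xv ⬝ᵥ ((Bᵀ * B) *ᵥ xv) := hlower
        _ = x ⬝ᵥ ((Cᵀ * C) *ᵥ x) := hGCx.symm
    have main : lstar / cmax ≤ hGC.eigenvalues (Tuple.sort hGC.eigenvalues ⟨r - r_A, by omega⟩) :=
      StiefelAux.cf_lower hGC r_A h1 h2 (lstar / cmax) V hVrank hq
    -- unfold svalue
    have e1 : svalue (Uᵀ * Z) r_A = Real.sqrt lstar := by
      rw [svalue, dif_pos ⟨h1, h2⟩]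
    have e2 : svalue Z 1 = Real.sqrt cmax := by
      rw [svalue, dif_pos ⟨le_refl 1, hr1⟩]
    have e3 : svalue (Uᵀ * (Z * N)) r_A
        = Real.sqrt (hGC.eigenvalues (Tuple.sort hGC.eigenvalues ⟨r - r_A, by omega⟩)) := by
      rw [svalue, dif_pos ⟨h1, h2⟩]
    rw [e1, e2, e3]
    calc Real.sqrt lstar / Real.sqrt cmax = Real.sqrt (lstar / cmax) := by
          rw [Real.sqrt_div hlnn]
      _ ≤ _ := Real.sqrt_le_sqrt main

end
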